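/- Expanding a leaf labelled A ∈ {N, I} of a labelled binary tree into a caret (internal node with two new leaves) transforms the encoding word by replacing the single letter A with the three-letter factor 'N a I', where 'a' is the lowercase of 'A'. Conversely, contracting a caret both of whose children are leaves replaces a factor 'N a I' in the code by the single uppercase letter 'A'. -/

import Mathlib

/-- The alphabet `{n, N, i, I}` used to encode binary trees. -/
inductive Letter
  | n | N | i | I
deriving DecidableEq, Repr

/-- Uppercase letters are the leaf labels `N`, `I`. -/
def Letter.isUpper : Letter → Bool
  | .N => true
  | .I => true
  | _ => false

/-- Lowercase version of a letter. -/
def Letter.toLower : Letter → Letter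
  | .N => .n
  | .I => .i
  | x => x

/-- Full binary trees: every internal node (caret) has exactly two children. -/
inductive BTree
  | leaf
  | node (l r : BTree)
deriving DecidableEq, Repr

/-- Number of carets (internal nodes). -/
def BTree.carets : BTree → ℕ
  | .leaf => 0
  | .node l r => l.carets + r.carets + 1

/-- Number of leaves. -/
def BTree.numLeaves : BTree → ℕ
  | .leaf => 1
  | .node l r => l.numLeaves + r.numLeaves

/-- Encoding of a tree, reading labels left to right.  The boolean parameter
records whether the position of this subtree is of `N`-type (`true`) or
`I`-type (`false`): leaves get the corresponding uppercase letter, internal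
nodes the corresponding lowercase letter, with the left subtree of a caret in
`N`-position and the right subtree in `I`-position. -/
def enc : BTree → Bool → List Letter
  | .leaf, b => [if b then .N else .I]
  | .node l r, b => enc l true ++ [if b then .n else .i] ++ enc r false

/-- The encoding word with the leftmost-leaf label `N` prepended (the word
`ψ_k(t)` of length `2k+1`). -/
def fullcode (t : BTree) : List Letter := enc t true

/-- The encoding word of the paper: the leftmost leaf is not labelled, so the
word of a tree with `k` carets has length `2k`. -/
def code (t : BTree) : List Letter := (fullcode t).tail

/-- Expand the `j`-th leaf (in left-to-right order, counting from `0`) into a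
caret with two leaves. -/
def expand : BTree → ℕ → BTree
  | .leaf, 0 => .node .leaf .leaf
  | .leaf, _ + 1 => .leaf
  | .node l r, k =>
      if k < l.numLeaves then .node (expand l k) r
      else .node l (expand r (k - l.numLeaves))


lemma enc_length (t : BTree) (b : Bool) : (enc t b).length = 2 * t.carets + 1 := by
  induction t generalizing b with
  | leaf => simp [enc, BTree.carets]
  | node l r ihl ihr => simp [enc, BTree.carets, ihl, ihr]; ring

lemma numLeaves_eq (t : BTree) : t.numLeaves = t.carets + 1 := by
  induction t with
  | leaf => rfl
  | node l r ihl ihr => simp [BTree.numLeaves, BTree.carets, ihl, ihr]; ring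

lemma key (t : BTree) (b : Bool) (j : ℕ) (hj : j < t.numLeaves) :
    ((enc t b).getD (2 * j) Letter.N).isUpper = true ∧
    enc (expand t j) b =
      (enc t b).take (2 * j) ++
        [Letter.N, ((enc t b).getD (2 * j) Letter.N).toLower, Letter.I] ++
        (enc t b).drop (2 * j + 1) := by
  induction t generalizing b j with
  | leaf =>
      have : j = 0 := by simpa [BTree.numLeaves] using hj
      subst this
      cases b <;> simp [enc, expand, Letter.isUpper, Letter.toLower]
  | node l r ihl ihr =>
      have hA : (enc l true).length = 2 * l.carets + 1 := enc_length l true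
      have hB : (enc r false).length = 2 * r.carets + 1 := enc_length r false
      have hln : l.numLeaves = l.carets + 1 := numLeaves_eq l
      have hrn : r.numLeaves = r.carets + 1 := numLeaves_eq r
      have hjn : j < l.numLeaves + r.numLeaves := hj
      by_cases h : j < l.numLeaves
      · have h2j : 2 * j < (enc l true).length := by omega
        obtain ⟨hup, heq⟩ := ihl true j h
        have hexp : expand (BTree.node l r) j = BTree.node (expand l j) r := by
          simp [expand, h]
        have hget : ((enc (BTree.node l r) b).getD (2 * j) Letter.N)
            = ((enc l true).getD (2 * j) Letter.N) := by
          simp only [enc, List.getD_eq_getElem?_getD, List.append_assoc]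
          rw [List.getElem?_append_left h2j]
        refine ⟨by rw [hget]; exact hup, ?_⟩
        rw [hexp, hget]
        show enc (expand l j) true ++ _ ++ enc r false = _
        rw [heq]
        simp only [enc]
        rw [List.append_assoc (enc l true),
          List.take_append_of_le_length (by omega),
          List.drop_append_of_le_length (by omega : 2 * j + 1 ≤ (enc l true).length)]
        simp [List.append_assoc]
      · set j' := j - l.numLeaves with hj'def
        have hj' : j' < r.numLeaves := by omega
        obtain ⟨hup, heq⟩ := ihr false j' hj'
        have hexp : expand (BTree.node l r) j = BTree.node l (expand r j') := by
          simp [expand, h, hj'def]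
        have hPlen : (enc l true ++ [if b then Letter.n else Letter.i]).length
            = 2 * l.numLeaves := by simp [hA]; omega
        have hidx : 2 * j = (enc l true ++ [if b then Letter.n else Letter.i]).length + 2 * j' := by
          omega
        have hget : ((enc (BTree.node l r) b).getD (2 * j) Letter.N)
            = ((enc r false).getD (2 * j') Letter.N) := by
          simp only [enc, List.getD_eq_getElem?_getD, ← List.append_assoc]
          rw [List.getElem?_append_right (by omega :
            (enc l true ++ [if b then Letter.n else Letter.i]).length ≤ 2 * j)]
          congr 2
          omega
        refine ⟨by rw [hget]; exact hup, ?_⟩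
        have ht : ((enc l true ++ [if b then Letter.n else Letter.i]) ++ enc r false).take (2 * j)
            = (enc l true ++ [if b then Letter.n else Letter.i]) ++ (enc r false).take (2 * j') := by
          rw [List.take_append,
            List.take_of_length_le (show (enc l true ++ [if b then Letter.n else Letter.i]).length ≤ 2 * j by omega),
            show 2 * j - (enc l true ++ [if b then Letter.n else Letter.i]).length = 2 * j' from by omega]
        have hd : ((enc l true ++ [if b then Letter.n else Letter.i]) ++ enc r false).drop (2 * j + 1)
            = (enc r false).drop (2 * j' + 1) := by
          rw [List.drop_append,
            List.drop_eq_nil_of_le (show (enc l true ++ [if b then Letter.n else Letter.i]).length ≤ 2 * j + 1 by omega),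
            show 2 * j + 1 - (enc l true ++ [if b then Letter.n else Letter.i]).length = 2 * j' + 1 from by omega,
            List.nil_append]
        rw [hexp, hget]
        show (enc l true ++ [if b then Letter.n else Letter.i]) ++ enc (expand r j') false
            = ((enc l true ++ [if b then Letter.n else Letter.i]) ++ enc r false).take (2 * j) ++ _ ++
              ((enc l true ++ [if b then Letter.n else Letter.i]) ++ enc r false).drop (2 * j + 1)
        rw [ht, hd, heq]
        simp [List.append_assoc]

/-- Expanding a leaf labelled `A ∈ {N, I}` into a caret replaces the single
letter `A` in the encoding word by the three-letter factor `N a I`, where `a`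
is the lowercase of `A`.  (Read backwards, contracting a caret whose children
are both leaves replaces the factor `N a I` by the single letter `A`.)  In the
word `fullcode t` (of length `2·carets + 1`) the `j`-th leaf sits at position
`2j`, and its label is an uppercase letter. -/
theorem fullcode_expand (t : BTree) (j : ℕ) (hj : j < t.numLeaves) :
    ((fullcode t).getD (2 * j) Letter.N).isUpper = true ∧
    fullcode (expand t j) =
      (fullcode t).take (2 * j) ++
        [Letter.N, ((fullcode t).getD (2 * j) Letter.N).toLower, Letter.I] ++
        (fullcode t).drop (2 * j + 1) := by
  exact key t true j hj
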